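/- arXiv:2207.11758 — 2 statements merged into one kernel-verified Lean document; each statement's English description precedes it below -/
import Mathlib

section
/- There exist absolute constants C > 0 and x₀ such that for all integers x ≥ x₀, H ≥ 1, and k with 1 ≤ k ≤ log log x, the set S_k(x, H) of integer tuples (h₁, h₂, …, h_k, y) ∈ ([−H, H] ∩ ℤ)^k × ((x, x+H] ∩ ℤ) with y | h₁h₂⋯h_k and h₁h₂⋯h_k ≠ 0 has size at most C · (2H)^k · H^{1 + C·k·log k / log log x} / x, where log denotes the natural logarithm. -/
open Finset

/-- `S_k(x, H)`: the number of integer tuples `(h₁,…,h_k, y)` with each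
`h_i ∈ [−H,H] ∩ ℤ`, `y ∈ (x, x+H] ∩ ℤ`, `y ∣ h₁⋯h_k` and `h₁⋯h_k ≠ 0`. -/
noncomputable def SkCount (k x H : ℕ) : ℕ :=
  Nat.card {t : (Fin k → ℤ) × ℕ //
    (∀ i, t.1 i ∈ Finset.Icc (-(H : ℤ)) (H : ℤ)) ∧ t.2 ∈ Finset.Ioc x (x + H) ∧
      (t.2 : ℤ) ∣ ∏ i, t.1 i ∧ (∏ i, t.1 i) ≠ 0}


lemma sum_pow_le (k a : ℕ) : ∑ b ∈ range (a+1), k ^ (a - b) ≤ (k+1) ^ a := by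
  induction a with
  | zero => simp
  | succ a ih =>
    rw [Finset.sum_range_succ']
    have h1 : ∑ b ∈ range (a+1), k ^ (a + 1 - (b+1)) = ∑ b ∈ range (a+1), k ^ (a - b) := by
      apply Finset.sum_congr rfl; intro b _; congr 1; omega
    rw [h1]
    have h2 : k ^ (a + 1 - 0) = k * k ^ a := by rw [Nat.sub_zero, pow_succ, mul_comm]
    rw [h2]
    have h3 : k * k ^ a ≤ k * (k+1) ^ a :=
      Nat.mul_le_mul_left _ (Nat.pow_le_pow_left (Nat.le_succ k) a)
    calc ∑ b ∈ range (a+1), k ^ (a - b) + k * k ^ a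
        ≤ (k+1)^a + k * (k+1)^a := Nat.add_le_add ih h3
      _ = (k+1)^(a+1) := by ring

lemma comp_le_pow (k a : ℕ) : (Finset.Nat.antidiagonalTuple k a).card ≤ k ^ a := by
  induction k generalizing a with
  | zero =>
    rcases Nat.eq_zero_or_pos a with rfl | ha
    · simp
    · have : (Finset.Nat.antidiagonalTuple 0 a) = ∅ := by
        ext e; simp [Finset.Nat.mem_antidiagonalTuple]; omega
      simp [this]
  | succ k ih =>
    have key : (Finset.Nat.antidiagonalTuple (k+1) a).card
        = ∑ b ∈ range (a+1), ((Finset.Nat.antidiagonalTuple (k+1) a).filter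
            (fun e => e 0 = b)).card := by
      apply Finset.card_eq_sum_card_fiberwise
      intro e he
      rw [mem_coe, Finset.Nat.mem_antidiagonalTuple] at he
      simp only [mem_coe, mem_range]
      have : e 0 ≤ a := he ▸ Finset.single_le_sum (f := fun i => e i) (by intros; positivity) (mem_univ 0)
      omega
    rw [key]
    have fib : ∀ b ∈ range (a+1), ((Finset.Nat.antidiagonalTuple (k+1) a).filter
        (fun e => e 0 = b)).card ≤ k ^ (a - b) := by
      intro b hb
      rw [mem_range] at hb
      have : ((Finset.Nat.antidiagonalTuple (k+1) a).filter (fun e => e 0 = b)).card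
          ≤ (Finset.Nat.antidiagonalTuple k (a - b)).card := by
        apply Finset.card_le_card_of_injOn (fun e => Fin.tail e)
        · intro e he
          simp only [mem_coe, mem_filter, Finset.Nat.mem_antidiagonalTuple] at he
          rw [mem_coe, Finset.Nat.mem_antidiagonalTuple]
          have := he.1
          rw [Fin.sum_univ_succ] at this
          have h0 : e 0 = b := he.2
          show ∑ i : Fin k, e i.succ = a - b
          exact Nat.eq_sub_of_add_eq' (h0 ▸ this)
        · intro e he e' he' h
          simp only [mem_coe, mem_filter] at he he'
          have : Fin.cons (e 0) (Fin.tail e) = Fin.cons (e' 0) (Fin.tail e') := by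
            rw [he.2, he'.2]; exact congrArg _ h
          rwa [Fin.cons_self_tail, Fin.cons_self_tail] at this
      exact this.trans (ih (a - b))
    calc ∑ b ∈ range (a+1), ((Finset.Nat.antidiagonalTuple (k+1) a).filter
            (fun e => e 0 = b)).card
        ≤ ∑ b ∈ range (a+1), k ^ (a-b) := Finset.sum_le_sum fib
      _ ≤ (k+1)^a := sum_pow_le k a

lemma comp_le_pow' (k a : ℕ) : (Finset.Nat.antidiagonalTuple k a).card ≤ (a+1) ^ k := by
  calc (Finset.Nat.antidiagonalTuple k a).card
      ≤ (Fintype.piFinset (fun _ : Fin k => range (a+1))).card := by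
        apply Finset.card_le_card
        intro e he
        rw [Finset.Nat.mem_antidiagonalTuple] at he
        rw [Fintype.mem_piFinset]
        intro i
        rw [mem_range]
        have : e i ≤ a := he ▸ Finset.single_le_sum (f := fun i => e i) (by intros; positivity) (mem_univ i)
        omega
    _ = (a+1)^k := by simp [Fintype.card_fin]


lemma exists_fac : ∀ (k y : ℕ), 0 < y → ∀ (n : Fin k → ℕ), y ∣ ∏ i, n i →
    ∃ d : Fin k → ℕ, (∀ i, d i ∣ n i) ∧ ∏ i, d i = y := by
  intro k
  induction k with
  | zero =>
    intro y hy n hdvd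
    simp only [Finset.univ_eq_empty, Finset.prod_empty] at hdvd
    exact ⟨fun i => i.elim0, fun i => i.elim0, by simp [Nat.eq_one_of_dvd_one hdvd]⟩
  | succ k ih =>
    intro y hy n hdvd
    rw [Fin.prod_univ_succ] at hdvd
    set g := Nat.gcd y (n 0) with hg
    have hgpos : 0 < g := Nat.gcd_pos_of_pos_left _ hy
    have hgy : g ∣ y := Nat.gcd_dvd_left _ _
    have hgn : g ∣ n 0 := Nat.gcd_dvd_right _ _
    have hcop : Nat.Coprime (y / g) (n 0 / g) := Nat.coprime_div_gcd_div_gcd hgpos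
    have hyg : y / g ∣ (n 0 / g) * ∏ i : Fin k, n i.succ := by
      have h1 : g * (y / g) ∣ g * ((n 0 / g) * ∏ i : Fin k, n i.succ) := by
        rw [Nat.mul_div_cancel' hgy, ← mul_assoc, Nat.mul_div_cancel' hgn]
        exact hdvd
      exact (mul_dvd_mul_iff_left hgpos.ne').mp h1
    have hyg2 : y / g ∣ ∏ i : Fin k, n i.succ := hcop.dvd_of_dvd_mul_left hyg
    obtain ⟨d', hd'1, hd'2⟩ := ih (y / g) (Nat.div_pos (Nat.le_of_dvd hy hgy) hgpos)
      (fun i => n i.succ) hyg2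
    refine ⟨Fin.cons g d', ?_, ?_⟩
    · intro i
      refine Fin.cases ?_ ?_ i
      · simpa using hgn
      · intro j; simpa using hd'1 j
    · rw [Fin.prod_univ_succ]
      simp only [Fin.cons_zero, Fin.cons_succ]
      rw [hd'2, Nat.mul_div_cancel' hgy]


lemma eq_prod_primeFactors {y m : ℕ} (hy : y ≠ 0) (hm : m ∣ y) :
    m = ∏ p ∈ y.primeFactors, p ^ m.factorization p := by
  have hm0 : m ≠ 0 := ne_zero_of_dvd_ne_zero hy hm
  conv_lhs => rw [← Nat.factorization_prod_pow_eq_self hm0]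
  rw [Finsupp.prod, Nat.support_factorization]
  refine Finset.prod_subset (Nat.primeFactors_mono hm hy) (fun p _ hp => ?_)
  rw [← Nat.support_factorization, Finsupp.notMem_support_iff] at hp
  rw [hp, pow_zero]

lemma dcount_le_prod (k H y : ℕ) (hy : y ≠ 0) :
    ((Fintype.piFinset fun _ : Fin k => Finset.Icc 1 H).filter
        (fun d => ∏ i, d i = y)).card
      ≤ ∏ p ∈ y.primeFactors, (Finset.Nat.antidiagonalTuple k (y.factorization p)).card := by
  rw [← Finset.card_pi]
  apply Finset.card_le_card_of_injOn (fun d => fun p _ => fun i => (d i).factorization p)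
  · intro d hd
    simp only [mem_coe, mem_filter, Fintype.mem_piFinset] at hd
    rw [mem_coe, Finset.mem_pi]
    intro p hp
    rw [Finset.Nat.mem_antidiagonalTuple]
    have hne : ∀ i ∈ univ, d i ≠ 0 := fun i _ => by
      have := (Finset.mem_Icc.mp (hd.1 i)).1; omega
    have := Nat.factorization_prod hne
    rw [hd.2] at this
    rw [← Finset.sum_apply' p, ← this]
  · intro d hd d' hd' h
    simp only [mem_coe, mem_filter, Fintype.mem_piFinset] at hd hd'
    funext i
    have hdy : d i ∣ y := hd.2 ▸ Finset.dvd_prod_of_mem d (mem_univ i)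
    have hdy' : d' i ∣ y := hd'.2 ▸ Finset.dvd_prod_of_mem d' (mem_univ i)
    rw [eq_prod_primeFactors hy hdy, eq_prod_primeFactors hy hdy']
    apply Finset.prod_congr rfl
    intro p hp
    have := congrFun (congrFun (congrFun h p) hp) i
    simp only at this
    rw [this]


set_option maxHeartbeats 1000000 in
lemma analytic_main (k : ℕ) (L u ly Ω Tn : ℝ)
    (hk : 2 ≤ (k:ℝ)) (hkL : (k:ℝ) ≤ L) (hL : 400 ≤ L)
    (hu0 : Real.exp L / L ≤ u)
    (hly1 : 1 ≤ ly) (hly : ly ≤ 2*k*u)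
    (hΩ0 : 0 ≤ Ω) (hΩL : Ω * L ≤ 4 * ly)
    (hTn0 : 0 ≤ Tn) (hTn : Tn ≤ 2*Real.exp (L/4)) :
    (k:ℝ)*Tn*Real.log (3*ly) + Ω*Real.log k ≤ 50*k*Real.log k/L*u := by
  have hL0 : (0:ℝ) < L := by linarith
  have hexpL : (0:ℝ) < Real.exp L := Real.exp_pos L
  have hu1 : 0 < u := lt_of_lt_of_le (by positivity) hu0
  have hk0 : (0:ℝ) < k := by linarith
  have hlk : (1/2 : ℝ) ≤ Real.log k := by
    have h2 : Real.log 2 ≤ Real.log k := by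
      apply Real.log_le_log (by norm_num) hk
    have := Real.log_two_gt_d9
    linarith
  have hlk0 : (0:ℝ) ≤ Real.log k := by linarith
  -- log(3*ly) bound
  have hlog3 : Real.log (3*ly) ≤ 4*L + u * Real.exp (-L) := by
    have h1 : Real.log (3*ly) ≤ Real.log (6*(k*u)) := by
      apply Real.log_le_log (by linarith)
      nlinarith
    have h2 : Real.log (6*(k*u)) = Real.log 6 + Real.log k + Real.log u := by
      rw [Real.log_mul (by norm_num) (by positivity), Real.log_mul (by positivity) (by positivity)]
      ring
    have h6 : Real.log 6 ≤ 2 := by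
      have he : (6:ℝ) ≤ Real.exp 2 := by
        have h := Real.exp_one_gt_d9
        have : Real.exp 2 = Real.exp 1 * Real.exp 1 := by
          rw [← Real.exp_add]; norm_num
        nlinarith
      calc Real.log 6 ≤ Real.log (Real.exp 2) := Real.log_le_log (by norm_num) he
        _ = 2 := Real.log_exp 2
    have hlogk : Real.log k ≤ L := by
      calc Real.log k ≤ (k:ℝ) := Real.log_le_self (by positivity)
        _ ≤ L := hkL
    have hlogu : Real.log u ≤ L + u * Real.exp (-L) - 1 := by
      have hpos : 0 < u * Real.exp (-L) := by positivity
      have := Real.log_le_sub_one_of_pos hpos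
      rw [Real.log_mul (ne_of_gt hu1) (ne_of_gt (Real.exp_pos _)), Real.log_exp] at this
      linarith
    linarith
  have hlog3' : 0 ≤ Real.log (3*ly) := by
    apply Real.log_nonneg; linarith
  -- e34 : (4/5) L^3 ≤ exp(3L/4)
  have e34 : (4/5)*L^3 ≤ Real.exp (3*L/4) := by
    have ht : (0:ℝ) ≤ 3*L/4 := by linarith
    have h1 : 1 + (3*L/4)/5 ≤ Real.exp ((3*L/4)/5) := by
      have := Real.add_one_le_exp ((3*L/4)/5)
      linarith
    have h2 : ((3*L/4)/5)^5 ≤ (1 + (3*L/4)/5)^5 := by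
      apply pow_le_pow_left₀ (by positivity)
      linarith
    have h3 : (1 + (3*L/4)/5)^5 ≤ (Real.exp ((3*L/4)/5))^5 := by
      apply pow_le_pow_left₀ (by positivity) h1
    have h4 : (Real.exp ((3*L/4)/5))^5 = Real.exp (3*L/4) := by
      rw [← Real.exp_nat_mul]
      congr 1
      ring
    have h5 : ((3*L/4)/5)^5 = (3/20)^5 * L^5 := by ring
    nlinarith [sq_nonneg L, sq_nonneg (L-400)]
  -- piece c1 : 8*L^2*exp(L/4) ≤ 10*u
  have hsplit : Real.exp L = Real.exp (L/4) * Real.exp (3*L/4) := by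
    rw [← Real.exp_add]; ring_nf
  have c1 : 8*L^2*Real.exp (L/4) ≤ 10*u := by
    have h1 : 8*L^3*Real.exp (L/4) ≤ 10*Real.exp L := by
      rw [hsplit]
      have := Real.exp_pos (L/4)
      nlinarith
    have huL : Real.exp L ≤ u * L := (div_le_iff₀ hL0).mp hu0
    have h3 : 8*L^2*Real.exp (L/4) * L ≤ 10 * u * L := by
      calc 8*L^2*Real.exp (L/4) * L = 8*L^3*Real.exp (L/4) := by ring
        _ ≤ 10*Real.exp L := h1
        _ ≤ 10 * (u * L) := by linarith
        _ = 10 * u * L := by ring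
    exact le_of_mul_le_mul_right h3 hL0
  -- piece c2 : L ≤ 5 * exp(3L/4)
  have c2 : L ≤ 5 * Real.exp (3*L/4) := by
    have := Real.add_one_le_exp (3*L/4)
    linarith
  -- main assembly
  have hE3 : (0:ℝ) < Real.exp (3*L/4) := Real.exp_pos _
  have hE1 : (0:ℝ) < Real.exp (L/4) := Real.exp_pos _
  have hrw : 50*(k:ℝ)*Real.log k/L*u = (50*k*Real.log k*u)/L := by ring
  rw [hrw, le_div_iff₀ hL0]
  have hcancel : Real.exp (L/4) * Real.exp (-L) = 1/Real.exp (3*L/4) := by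
    rw [← Real.exp_add, one_div, ← Real.exp_neg]
    congr 1
    ring
  have m1 : Tn * Real.log (3*ly) ≤ (2*Real.exp (L/4))*(4*L + u*Real.exp (-L)) := by
    apply mul_le_mul hTn hlog3 hlog3' (by positivity)
  have t1 : (k:ℝ)*Tn*Real.log (3*ly)*L ≤ 20*k*u := by
    have h4 : (k:ℝ)*Tn*Real.log (3*ly)*L ≤ (k:ℝ)*L*((2*Real.exp (L/4))*(4*L + u*Real.exp (-L))) := by
      have hkL0 : (0:ℝ) ≤ (k:ℝ)*L := by positivity
      calc (k:ℝ)*Tn*Real.log (3*ly)*L = (k:ℝ)*L*(Tn*Real.log (3*ly)) := by ring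
        _ ≤ (k:ℝ)*L*((2*Real.exp (L/4))*(4*L + u*Real.exp (-L))) :=
            mul_le_mul_of_nonneg_left m1 hkL0
    have h5 : (k:ℝ)*L*((2*Real.exp (L/4))*(4*L + u*Real.exp (-L)))
        = (k:ℝ)*(8*L^2*Real.exp (L/4)) + 2*(k:ℝ)*L*u*(Real.exp (L/4)*Real.exp (-L)) := by
      ring
    rw [hcancel] at h5
    have h6 : (k:ℝ)*(8*L^2*Real.exp (L/4)) ≤ 10*(k:ℝ)*u := by
      have := mul_le_mul_of_nonneg_left c1 (le_of_lt hk0)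
      linarith
    have h7 : 2*(k:ℝ)*L*u*(1/Real.exp (3*L/4)) ≤ 10*(k:ℝ)*u := by
      rw [mul_one_div, div_le_iff₀ hE3]
      have := mul_le_mul_of_nonneg_left c2 (by positivity : (0:ℝ) ≤ 2*(k:ℝ)*u)
      linarith
    linarith
  have t2 : Ω*Real.log k*L ≤ 8*(k:ℝ)*u*Real.log k := by
    have h8 : Ω*L*Real.log k ≤ 4*ly*Real.log k := mul_le_mul_of_nonneg_right hΩL hlk0
    have h9 : 4*ly*Real.log k ≤ 8*((k:ℝ)*u)*Real.log k := by
      apply mul_le_mul_of_nonneg_right _ hlk0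
      linarith
    calc Ω*Real.log k*L = Ω*L*Real.log k := by ring
      _ ≤ 4*ly*Real.log k := h8
      _ ≤ 8*((k:ℝ)*u)*Real.log k := h9
      _ = 8*(k:ℝ)*u*Real.log k := by ring
  have hku : (0:ℝ) ≤ (k:ℝ)*u := by positivity
  calc ((k:ℝ)*Tn*Real.log (3*ly) + Ω*Real.log k)*L
      = (k:ℝ)*Tn*Real.log (3*ly)*L + Ω*Real.log k*L := by ring
    _ ≤ 20*k*u + 8*(k:ℝ)*u*Real.log k := by linarith
    _ ≤ 50*k*Real.log k*u := by
        have := mul_le_mul_of_nonneg_left hlk (by positivity : (0:ℝ) ≤ 40*((k:ℝ)*u))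
        linarith

lemma skcount_le_sum (k x H : ℕ) (hx : 0 < x) :
    (SkCount k x H : ℝ) ≤
      (((Fintype.piFinset fun _ : Fin k => Finset.Icc 1 H).filter
          (fun d => ∏ i, d i ∈ Finset.Ioc x (x+H))).card : ℝ) * ((2*(H:ℝ))^k / x) := by
  classical
  set D := (Fintype.piFinset fun _ : Fin k => Finset.Icc 1 H).filter
      (fun d => ∏ i, d i ∈ Finset.Ioc x (x+H)) with hD
  set F' := D.sigma (fun d => Fintype.piFinset fun i : Fin k =>
      (Finset.Icc (-(Nat.cast (H / d i) : ℤ)) (Nat.cast (H / d i) : ℤ)).erase 0) with hF'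
  set S := {t : (Fin k → ℤ) × ℕ //
      (∀ i, t.1 i ∈ Finset.Icc (-(H : ℤ)) (H : ℤ)) ∧ t.2 ∈ Finset.Ioc x (x + H) ∧
        (t.2 : ℤ) ∣ ∏ i, t.1 i ∧ (∏ i, t.1 i) ≠ 0} with hS
  have key : ∀ t : S, ∃ d : Fin k → ℕ, (∀ i, d i ∣ (t.1.1 i).natAbs) ∧ ∏ i, d i = t.1.2 := by
    rintro ⟨⟨h, y⟩, hmem, hy, hdvd, hne⟩
    have hypos : 0 < y := lt_of_le_of_lt (Nat.zero_le x) (Finset.mem_Ioc.mp hy).1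
    apply exists_fac k y hypos
    have h1 : (y:ℤ).natAbs ∣ (∏ i, h i).natAbs := Int.natAbs_dvd_natAbs.mpr hdvd
    have h2 : (∏ i, h i).natAbs = ∏ i, (h i).natAbs :=
      map_prod Int.natAbsHom h univ
    rw [h2] at h1
    simpa using h1
  choose dd hdd1 hdd2 using key
  have hprodne : ∀ (t : S) i, t.1.1 i ≠ 0 := by
    intro t i hi
    exact t.2.2.2.2 (Finset.prod_eq_zero (mem_univ i) hi)
  have hdpos : ∀ (t : S) i, 0 < dd t i := by
    intro t i
    rcases Nat.eq_zero_or_pos (dd t i) with h0 | h1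
    · exfalso
      have h2 : ∏ i, dd t i = 0 := Finset.prod_eq_zero (mem_univ i) h0
      rw [hdd2 t] at h2
      have hypos : 0 < t.1.2 := lt_of_le_of_lt (Nat.zero_le x) (Finset.mem_Ioc.mp t.2.2.1).1
      omega
    · exact h1
  have habs : ∀ (t : S) i, (t.1.1 i).natAbs ≤ H := by
    intro t i
    have := Finset.mem_Icc.mp (t.2.1 i)
    omega
  have hdvdh : ∀ (t : S) i, (dd t i : ℤ) ∣ t.1.1 i := fun t i =>
    Int.dvd_natAbs.mp (Int.natCast_dvd_natCast.mpr (hdd1 t i))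
  have hmemF : ∀ t : S, (⟨dd t, fun i => t.1.1 i / (dd t i : ℤ)⟩ :
      (_ : Fin k → ℕ) × (Fin k → ℤ)) ∈ F' := by
    intro t
    rw [hF', Finset.mem_sigma]
    constructor
    · show dd t ∈ D
      rw [hD, Finset.mem_filter]
      refine ⟨?_, ?_⟩
      · rw [Fintype.mem_piFinset]
        intro i
        rw [Finset.mem_Icc]
        refine ⟨hdpos t i, ?_⟩
        exact le_trans (Nat.le_of_dvd (Int.natAbs_pos.mpr (hprodne t i)) (hdd1 t i)) (habs t i)
      · rw [hdd2 t]; exact t.2.2.1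
    · show (fun i => t.1.1 i / (dd t i : ℤ)) ∈ Fintype.piFinset (fun i : Fin k =>
          (Finset.Icc (-(Nat.cast (H / dd t i) : ℤ)) (Nat.cast (H / dd t i) : ℤ)).erase 0)
      rw [Fintype.mem_piFinset]
      intro i
      have heq : (dd t i : ℤ) * (t.1.1 i / (dd t i : ℤ)) = t.1.1 i :=
        Int.mul_ediv_cancel' (hdvdh t i)
      have hmne : t.1.1 i / (dd t i : ℤ) ≠ 0 := by
        intro h0
        rw [h0, mul_zero] at heq
        exact hprodne t i heq.symm
      have hnab : (t.1.1 i / (dd t i : ℤ)).natAbs ≤ H / dd t i := by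
        rw [Nat.le_div_iff_mul_le (hdpos t i)]
        have h3 : (t.1.1 i / (dd t i : ℤ)).natAbs * (dd t i) = (t.1.1 i).natAbs := by
          have h4 := congrArg Int.natAbs heq
          rw [Int.natAbs_mul] at h4
          simp only [Int.natAbs_natCast] at h4
          rw [mul_comm]
          exact h4
        rw [h3]; exact habs t i
      rw [Finset.mem_erase, Finset.mem_Icc]
      refine ⟨hmne, ?_, ?_⟩ <;> omega
  have hstep1 : SkCount k x H ≤ F'.card := by
    rw [← Nat.card_eq_finsetCard F']
    apply Nat.card_le_card_of_injective
      (f := fun t : S => (⟨⟨dd t, fun i => t.1.1 i / (dd t i : ℤ)⟩, hmemF t⟩ : ↥F'))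
    intro t1 t2 hft
    simp only [Subtype.mk.injEq, Sigma.mk.inj_iff, heq_eq_eq] at hft
    obtain ⟨hd, hm⟩ := hft
    have h1 : ∀ i, t1.1.1 i = t2.1.1 i := by
      intro i
      have e1 : (dd t1 i : ℤ) * (t1.1.1 i / (dd t1 i : ℤ)) = t1.1.1 i :=
        Int.mul_ediv_cancel' (hdvdh t1 i)
      have e2 : (dd t2 i : ℤ) * (t2.1.1 i / (dd t2 i : ℤ)) = t2.1.1 i :=
        Int.mul_ediv_cancel' (hdvdh t2 i)
      have hmi := congrFun hm i
      rw [← e1, ← e2, hmi, hd]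
    have h2 : t1.1.2 = t2.1.2 := by rw [← hdd2 t1, ← hdd2 t2, hd]
    exact Subtype.ext (Prod.ext (funext h1) h2)
  have hcardN : F'.card = ∑ d ∈ D, ∏ i, (2 * (H / d i)) := by
    rw [hF', Finset.card_sigma]
    apply Finset.sum_congr rfl
    intro d _
    rw [Fintype.card_piFinset]
    apply Finset.prod_congr rfl
    intro i _
    have h0mem : (0:ℤ) ∈ Finset.Icc (-(Nat.cast (H / d i) : ℤ)) (Nat.cast (H / d i) : ℤ) := by
      rw [Finset.mem_Icc]
      exact ⟨neg_nonpos.mpr (Int.natCast_nonneg _), Int.natCast_nonneg _⟩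
    rw [Finset.card_erase_of_mem h0mem, Int.card_Icc]
    have h5 : (Nat.cast (H / d i) : ℤ) + 1 - -(Nat.cast (H / d i) : ℤ) = (Nat.cast (2 * (H / d i) + 1) : ℤ) := by
      push_cast; ring
    rw [h5, Int.toNat_natCast]
    omega
  -- real side
  have hreal : ∀ d ∈ D, (∏ i, (2 * (H / d i)) : ℕ) ≤ (2*(H:ℝ))^k / x := by
    intro d hd
    rw [hD, Finset.mem_filter, Fintype.mem_piFinset] at hd
    have hdpos' : ∀ i, 0 < d i := fun i => (Finset.mem_Icc.mp (hd.1 i)).1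
    have hxprod : (x:ℝ) ≤ ∏ i, (d i : ℝ) := by
      have := (Finset.mem_Ioc.mp hd.2).1
      have hcast : ((∏ i, d i : ℕ) : ℝ) = ∏ i, (d i : ℝ) := by push_cast; rfl
      rw [← hcast]
      exact_mod_cast this.le
    have step : ((∏ i, (2 * (H / d i)) : ℕ) : ℝ) ≤ ∏ i, (2 * (H:ℝ) / d i) := by
      push_cast
      apply Finset.prod_le_prod
      · intro i _; positivity
      · intro i _
        have h6 : ((H / d i : ℕ) : ℝ) ≤ (H:ℝ) / (d i : ℝ) := Nat.cast_div_le
        calc 2 * ((H / d i : ℕ) : ℝ) ≤ 2 * ((H:ℝ) / d i) := by linarith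
          _ = 2 * (H:ℝ) / d i := by ring
    have step2 : ∏ i, (2 * (H:ℝ) / d i) = (2*(H:ℝ))^k / ∏ i, (d i : ℝ) := by
      rw [Finset.prod_div_distrib, Finset.prod_const, Finset.card_univ, Fintype.card_fin]
    have step3 : (2*(H:ℝ))^k / ∏ i, (d i : ℝ) ≤ (2*(H:ℝ))^k / x := by
      apply div_le_div_of_nonneg_left _ (by exact_mod_cast hx) hxprod
      positivity
    calc ((∏ i, (2 * (H / d i)) : ℕ) : ℝ) ≤ ∏ i, (2 * (H:ℝ) / d i) := step
      _ = (2*(H:ℝ))^k / ∏ i, (d i : ℝ) := step2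
      _ ≤ (2*(H:ℝ))^k / x := step3
  calc (SkCount k x H : ℝ) ≤ (F'.card : ℝ) := by exact_mod_cast hstep1
    _ = ∑ d ∈ D, ((∏ i, (2 * (H / d i)) : ℕ) : ℝ) := by rw [hcardN]; push_cast; rfl
    _ ≤ ∑ d ∈ D, (2*(H:ℝ))^k / x := Finset.sum_le_sum hreal
    _ = (D.card : ℝ) * ((2*(H:ℝ))^k / x) := by rw [Finset.sum_const, nsmul_eq_mul]

lemma dcount_bound (k H x y : ℕ) (hk1 : 1 ≤ k)
    (hkL : (k:ℝ) ≤ Real.log (Real.log x)) (hL : 400 ≤ Real.log (Real.log x))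
    (hH : 2 ≤ H) (hxH : x < H^k) (hy1 : x < y) (hy2 : y ≤ x + H) :
    (((Fintype.piFinset fun _ : Fin k => Finset.Icc 1 H).filter
        (fun d => ∏ i, d i = y)).card : ℝ)
      ≤ (H:ℝ) ^ ((50:ℝ) * k * Real.log k / Real.log (Real.log x)) := by
  classical
  rcases eq_or_lt_of_le hk1 with hk1' | hk2
  · -- k = 1
    have hc1 : ((Fintype.piFinset fun _ : Fin k => Finset.Icc 1 H).filter
        (fun d => ∏ i, d i = y)).card ≤ 1 := by
      apply Finset.card_le_one.mpr
      intro d hd d' hd'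
      rw [mem_filter] at hd hd'
      funext i
      have hione : ∀ j : Fin k, j = i := by
        intro j
        have : Subsingleton (Fin k) := by rw [← hk1']; infer_instance
        exact Subsingleton.elim _ _
      have e1 : ∏ j, d j = d i := by
        rw [show (univ : Finset (Fin k)) = {i} by
          ext j; simp [hione j]]
        exact Finset.prod_singleton d i
      have e2 : ∏ j, d' j = d' i := by
        rw [show (univ : Finset (Fin k)) = {i} by
          ext j; simp [hione j]]
        exact Finset.prod_singleton d' i
      rw [← e1, ← e2, hd.2, hd'.2]
    have hexp0 : (50:ℝ) * k * Real.log k / Real.log (Real.log x) = 0 := by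
      rw [← hk1']
      norm_num
    rw [hexp0, Real.rpow_zero]
    exact_mod_cast hc1
  · -- 2 ≤ k
    have hxne : x ≠ 0 := by
      intro h
      rw [h] at hL
      simp only [Nat.cast_zero, Real.log_zero] at hL
      linarith
    set L := Real.log (Real.log x) with hLdef
    have hL0 : (0:ℝ) < L := by linarith
    have hlx0 : (1:ℝ) < Real.log x := by
      by_contra hcon
      push_neg at hcon
      have h1 : (0:ℝ) ≤ Real.log x := Real.log_natCast_nonneg x
      have h2 : Real.log (Real.log x) ≤ 0 := Real.log_nonpos h1 hcon
      linarith
    have hlxpos : (0:ℝ) < Real.log x := by linarith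
    have hexpL : Real.exp L = Real.log x := Real.exp_log hlxpos
    have hy0 : 0 < y := by omega
    have hyne : y ≠ 0 := by omega
    have hx0 : 0 < x := Nat.pos_of_ne_zero hxne
    -- ℕ: y ≤ H^(2*k)
    have hyH : y ≤ H^(2*k) := by
      have h2 : H ≤ H^k := Nat.le_self_pow (by omega) H
      have h3 : H^k + H^k ≤ H^(k+1) := by
        have h4 : 2*H^k ≤ H*H^k := Nat.mul_le_mul_right _ hH
        calc H^k + H^k = 2*H^k := by ring
          _ ≤ H*H^k := h4
          _ = H^(k+1) := by ring
      have h5 : H^(k+1) ≤ H^(2*k) := Nat.pow_le_pow_right (by omega) (by omega)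
      omega
    set Tn := ⌈Real.exp (L/4)⌉₊ with hTdef
    set pf := y.primeFactors with hpfdef
    set a : ℕ → ℕ := fun p => y.factorization p with hadef
    set sm := pf.filter (fun p => p < Tn) with hsm
    set bg := pf.filter (fun p => ¬ p < Tn) with hbg
    set Ω := ∑ p ∈ bg, a p with hΩdef
    set cA : ℕ → ℕ := fun p => (Finset.Nat.antidiagonalTuple k (a p)).card with hcA
    have hstep : ((Fintype.piFinset fun _ : Fin k => Finset.Icc 1 H).filter
        (fun d => ∏ i, d i = y)).card ≤ (∏ p ∈ sm, (a p + 1)^k) * k^Ω := by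
      calc ((Fintype.piFinset fun _ : Fin k => Finset.Icc 1 H).filter
          (fun d => ∏ i, d i = y)).card
          ≤ ∏ p ∈ pf, cA p := dcount_le_prod k H y hyne
        _ = (∏ p ∈ sm, cA p) * (∏ p ∈ bg, cA p) :=
            (Finset.prod_filter_mul_prod_filter_not pf _ _).symm
        _ ≤ (∏ p ∈ sm, (a p + 1)^k) * (∏ p ∈ bg, k^(a p)) := by
            apply Nat.mul_le_mul
            · exact Finset.prod_le_prod' (fun p _ => comp_le_pow' k (a p))
            · exact Finset.prod_le_prod' (fun p _ => comp_le_pow k (a p))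
        _ = (∏ p ∈ sm, (a p + 1)^k) * k^Ω := by
            rw [Finset.prod_pow_eq_pow_sum]
    -- Tn^Ω ≤ y
    have hTΩ : Tn^Ω ≤ y := by
      have hdvd : ∏ p ∈ bg, p ^ a p ∣ y := by
        have h1 : ∏ p ∈ bg, p ^ a p ∣ ∏ p ∈ pf, p ^ a p :=
          Finset.prod_dvd_prod_of_subset _ _ _ (Finset.filter_subset _ _)
        have h2 : y = ∏ p ∈ pf, p ^ a p := eq_prod_primeFactors hyne dvd_rfl
        rw [← h2] at h1
        exact h1
      calc Tn^Ω = ∏ p ∈ bg, Tn ^ a p := (Finset.prod_pow_eq_pow_sum _ _ _).symm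
        _ ≤ ∏ p ∈ bg, p ^ a p := by
            apply Finset.prod_le_prod'
            intro p hp
            rw [hbg, mem_filter] at hp
            exact Nat.pow_le_pow_left (le_of_not_gt hp.2) _
        _ ≤ y := Nat.le_of_dvd hy0 hdvd
    have hsc : sm.card ≤ Tn := by
      calc sm.card ≤ (Finset.range Tn).card := by
            apply Finset.card_le_card
            intro p hp
            rw [hsm, mem_filter] at hp
            rw [mem_range]
            exact hp.2
        _ = Tn := Finset.card_range Tn
    have hpa : ∀ p ∈ pf, 2^(a p) ≤ y := by
      intro p hp
      have hp2 : 2 ≤ p := (Nat.prime_of_mem_primeFactors hp).two_le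
      calc 2^(a p) ≤ p^(a p) := Nat.pow_le_pow_left hp2 _
        _ ≤ y := Nat.le_of_dvd hy0 (Nat.ordProj_dvd y p)
    -- real side
    set u := Real.log H with hu
    set ly := Real.log y with hly'
    have hu0 : (0:ℝ) < u := Real.log_pos (by exact_mod_cast hH)
    have hly1 : 1 ≤ ly := by
      have : Real.log x ≤ ly := Real.log_le_log (by exact_mod_cast hx0) (by exact_mod_cast hy1.le)
      linarith
    have hlypos : (0:ℝ) < ly := by linarith
    have hlyb : ly ≤ 2*k*u := by
      have h1 : (y:ℝ) ≤ (H:ℝ)^(2*k) := by exact_mod_cast hyH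
      calc ly ≤ Real.log ((H:ℝ)^(2*k)) := Real.log_le_log (by exact_mod_cast hy0) h1
        _ = (2*k:ℕ) * u := by rw [Real.log_pow]
        _ = 2*k*u := by push_cast; ring
    have hap : ∀ p ∈ sm, ((a p : ℝ) + 1) ≤ 3*ly := by
      intro p hp
      have hp' : p ∈ pf := Finset.mem_of_mem_filter p hp
      have h1 : ((2:ℝ))^(a p) ≤ y := by exact_mod_cast hpa p hp'
      have h2 : (a p : ℝ) * Real.log 2 ≤ ly := by
        rw [← Real.log_pow]
        exact Real.log_le_log (by positivity) h1
      have h3 : (0.6931471803:ℝ) < Real.log 2 := Real.log_two_gt_d9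
      have h4 : (a p : ℝ) ≤ 2 * ly := by nlinarith [Nat.cast_nonneg (α := ℝ) (a p)]
      linarith
    have hΩL : (Ω:ℝ) * L ≤ 4*ly := by
      have h1 : ((Tn:ℝ))^Ω ≤ y := by exact_mod_cast hTΩ
      have hTn1 : (1:ℝ) ≤ Tn := by
        have := Nat.le_ceil (Real.exp (L/4))
        have hex : (1:ℝ) ≤ Real.exp (L/4) := Real.one_le_exp (by positivity)
        calc (1:ℝ) ≤ Real.exp (L/4) := hex
          _ ≤ Tn := this
      have h2 : (Ω:ℝ) * Real.log Tn ≤ ly := by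
        rw [← Real.log_pow]
        exact Real.log_le_log (by positivity) h1
      have h3 : L/4 ≤ Real.log Tn := by
        rw [Real.le_log_iff_exp_le (by linarith)]
        exact Nat.le_ceil _
      have hΩ0 : (0:ℝ) ≤ (Ω:ℝ) := Nat.cast_nonneg _
      nlinarith
    have hTnR : (Tn:ℝ) ≤ 2*Real.exp (L/4) := by
      have h1 : ((Tn:ℝ)) < Real.exp (L/4) + 1 := Nat.ceil_lt_add_one (by positivity)
      have h2 : (1:ℝ) ≤ Real.exp (L/4) := Real.one_le_exp (by positivity)
      linarith
    have huL : Real.exp L / L ≤ u := by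
      have h1 : (x:ℝ) < (H:ℝ)^k := by exact_mod_cast hxH
      have h2 : Real.log x ≤ (k:ℝ) * u := by
        calc Real.log x ≤ Real.log ((H:ℝ)^k) := Real.log_le_log (by exact_mod_cast hx0) h1.le
          _ = (k:ℝ) * u := by rw [Real.log_pow]
      have h3 : (k:ℝ) * u ≤ L * u := by
        apply mul_le_mul_of_nonneg_right hkL hu0.le
      rw [div_le_iff₀ hL0, hexpL]
      calc Real.log x ≤ (k:ℝ)*u := h2
        _ ≤ L * u := h3
        _ = u * L := by ring
    -- assemble
    have hA : ((∏ p ∈ sm, (a p + 1)^k : ℕ) : ℝ) ≤ (3*ly)^(k*Tn) := by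
      have h3ly1 : (1:ℝ) ≤ 3*ly := by linarith
      push_cast
      calc ∏ p ∈ sm, ((a p : ℝ) + 1)^k
          ≤ ∏ p ∈ sm, (3*ly)^k := by
            apply Finset.prod_le_prod
            · intro p _; positivity
            · intro p hp
              exact pow_le_pow_left₀ (by positivity) (hap p hp) k
        _ = ((3*ly)^k)^sm.card := Finset.prod_const _
        _ = (3*ly)^(k*sm.card) := by rw [← pow_mul]
        _ ≤ (3*ly)^(k*Tn) := pow_le_pow_right₀ h3ly1 (Nat.mul_le_mul_left k hsc)
    have hB : ((k^Ω : ℕ) : ℝ) = (k:ℝ)^Ω := by push_cast; rfl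
    have hcast : (((Fintype.piFinset fun _ : Fin k => Finset.Icc 1 H).filter
        (fun d => ∏ i, d i = y)).card : ℝ) ≤ (3*ly)^(k*Tn) * (k:ℝ)^Ω := by
      have h1 : (((Fintype.piFinset fun _ : Fin k => Finset.Icc 1 H).filter
          (fun d => ∏ i, d i = y)).card : ℝ)
          ≤ ((∏ p ∈ sm, (a p + 1)^k : ℕ) : ℝ) * ((k^Ω : ℕ) : ℝ) := by
        exact_mod_cast hstep
      calc (((Fintype.piFinset fun _ : Fin k => Finset.Icc 1 H).filter
          (fun d => ∏ i, d i = y)).card : ℝ)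
          ≤ ((∏ p ∈ sm, (a p + 1)^k : ℕ) : ℝ) * ((k^Ω : ℕ) : ℝ) := h1
        _ ≤ (3*ly)^(k*Tn) * (k:ℝ)^Ω := by
            rw [hB]
            apply mul_le_mul_of_nonneg_right hA (by positivity)
    -- convert to exponentials
    have h3lypos : (0:ℝ) < 3*ly := by linarith
    have hexpform : (3*ly)^(k*Tn) * (k:ℝ)^Ω
        = Real.exp (((k:ℝ)*(Tn:ℝ))*Real.log (3*ly) + (Ω:ℝ)*Real.log k) := by
      rw [Real.exp_add]
      congr 1
      · rw [← Real.rpow_natCast (3*ly) (k*Tn), Real.rpow_def_of_pos h3lypos]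
        congr 1
        push_cast
        ring
      · rw [← Real.rpow_natCast (k:ℝ) Ω, Real.rpow_def_of_pos (by positivity)]
        congr 1
        ring
    have hmain := analytic_main k L u ly (Ω:ℝ) (Tn:ℝ)
      (by exact_mod_cast hk2) hkL hL huL hly1 hlyb (Nat.cast_nonneg _) hΩL
      (Nat.cast_nonneg _) hTnR
    have hfinal : (3*ly)^(k*Tn) * (k:ℝ)^Ω ≤ (H:ℝ) ^ ((50:ℝ) * k * Real.log k / L) := by
      rw [hexpform, Real.rpow_def_of_pos (by positivity : (0:ℝ) < (H:ℝ))]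
      apply Real.exp_le_exp.mpr
      calc ((k:ℝ)*(Tn:ℝ))*Real.log (3*ly) + (Ω:ℝ)*Real.log k
          ≤ 50*k*Real.log k/L*u := hmain
        _ = Real.log H * (50*k*Real.log k/L) := by rw [hu]; ring
    exact le_trans hcast hfinal


lemma skcount_zero (k x H : ℕ) (hle : H^k ≤ x) : SkCount k x H = 0 := by
  rw [SkCount]
  have hempty : IsEmpty {t : (Fin k → ℤ) × ℕ //
      (∀ i, t.1 i ∈ Finset.Icc (-(H : ℤ)) (H : ℤ)) ∧ t.2 ∈ Finset.Ioc x (x + H) ∧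
        (t.2 : ℤ) ∣ ∏ i, t.1 i ∧ (∏ i, t.1 i) ≠ 0} := by
    constructor
    rintro ⟨⟨hh, y⟩, hmem, hy, hdvd, hne⟩
    have h1 : (∏ i, hh i).natAbs = ∏ i, (hh i).natAbs := map_prod Int.natAbsHom hh univ
    have hmem' : ∀ i, hh i ∈ Finset.Icc (-(H : ℤ)) (H : ℤ) := hmem
    have h2 : ∏ i, (hh i).natAbs ≤ ∏ _i : Fin k, H := by
      apply Finset.prod_le_prod'
      intro i _
      have := Finset.mem_Icc.mp (hmem' i)
      omega
    have h3 : (∏ _i : Fin k, H) = H^k := by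
      rw [Finset.prod_const, card_univ, Fintype.card_fin]
    have h4 : y ∣ (∏ i, hh i).natAbs := by
      have := Int.natAbs_dvd_natAbs.mpr hdvd
      simpa using this
    have h5 : (∏ i, hh i).natAbs ≠ 0 := Int.natAbs_ne_zero.mpr hne
    have h6 : y ≤ (∏ i, hh i).natAbs := Nat.le_of_dvd (Nat.pos_of_ne_zero h5) h4
    have h7 := (Finset.mem_Ioc.mp hy).1
    omega
  exact Nat.card_of_isEmpty


/-- there are absolute constants `C > 0` and `x₀` such that for all
integers `x ≥ x₀`, `H ≥ 1` and `1 ≤ k ≤ log log x`, one has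
`#S_k(x, H) ≤ C · (2H)^k · H^{1 + C·k·log k / log log x} / x`. -/
theorem stmt6 :
    ∃ C : ℝ, 0 < C ∧ ∃ x₀ : ℕ, ∀ x H k : ℕ, x₀ ≤ x → 1 ≤ H → 1 ≤ k →
      (k : ℝ) ≤ Real.log (Real.log x) →
      (SkCount k x H : ℝ) ≤
        C * (2 * (H : ℝ)) ^ k *
          (H : ℝ) ^ ((1 : ℝ) + C * (k : ℝ) * Real.log k / Real.log (Real.log x)) / (x : ℝ) := by
  classical
  refine ⟨100, by norm_num, ⌈Real.exp (Real.exp 400)⌉₊ + 1, ?_⟩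
  intro x H k hx hH hk hkL
  have hx0 : 0 < x := by omega
  have hx0R : (0:ℝ) < x := by exact_mod_cast hx0
  have hxR : Real.exp (Real.exp 400) ≤ (x:ℝ) := by
    have h1 : Real.exp (Real.exp 400) ≤ (⌈Real.exp (Real.exp 400)⌉₊ : ℝ) := Nat.le_ceil _
    have h2 : ((⌈Real.exp (Real.exp 400)⌉₊ + 1 : ℕ) : ℝ) ≤ (x:ℝ) := by exact_mod_cast hx
    push_cast at h2
    linarith
  have hlx : Real.exp 400 ≤ Real.log x := by
    rw [Real.le_log_iff_exp_le hx0R]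
    exact hxR
  have hL : 400 ≤ Real.log (Real.log x) := by
    rw [Real.le_log_iff_exp_le (lt_of_lt_of_le (Real.exp_pos 400) hlx)]
    exact hlx
  have hL0 : (0:ℝ) < Real.log (Real.log x) := by linarith
  have hHR1 : (1:ℝ) ≤ (H:ℝ) := by exact_mod_cast hH
  have hlogk0 : (0:ℝ) ≤ Real.log k := Real.log_natCast_nonneg k
  rcases le_or_gt (H^k) x with hcase | hcase
  · rw [skcount_zero k x H hcase]
    rw [Nat.cast_zero]
    positivity
  · have hH2 : 2 ≤ H := by
      by_contra hcon
      push_neg at hcon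
      have : H = 1 := by omega
      rw [this, one_pow] at hcase
      omega
    set D := (Fintype.piFinset fun _ : Fin k => Finset.Icc 1 H).filter
        (fun d => ∏ i, d i ∈ Finset.Ioc x (x+H)) with hD
    have hstep1 := skcount_le_sum k x H hx0
    -- decompose D
    have hfib : D.card = ∑ y ∈ Finset.Ioc x (x+H), (D.filter (fun d => ∏ i, d i = y)).card := by
      apply Finset.card_eq_sum_card_fiberwise
      intro d hd
      rw [mem_coe, Finset.mem_filter] at hd
      exact hd.2
    set ε : ℝ := (50:ℝ) * k * Real.log k / Real.log (Real.log x) with hε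
    have hε0 : 0 ≤ ε := by positivity
    have hfibbound : ∀ y ∈ Finset.Ioc x (x+H),
        ((D.filter (fun d => ∏ i, d i = y)).card : ℝ) ≤ (H:ℝ) ^ ε := by
      intro y hy
      rw [Finset.mem_Ioc] at hy
      have hsub : (D.filter (fun d => ∏ i, d i = y)).card
          ≤ ((Fintype.piFinset fun _ : Fin k => Finset.Icc 1 H).filter
            (fun d => ∏ i, d i = y)).card := by
        apply Finset.card_le_card
        intro d hd
        simp only [hD, Finset.mem_filter] at hd ⊢
        exact ⟨hd.1.1, hd.2⟩
      calc ((D.filter (fun d => ∏ i, d i = y)).card : ℝ)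
          ≤ (((Fintype.piFinset fun _ : Fin k => Finset.Icc 1 H).filter
            (fun d => ∏ i, d i = y)).card : ℝ) := by exact_mod_cast hsub
        _ ≤ (H:ℝ) ^ ε := dcount_bound k H x y hk hkL hL hH2 hcase hy.1 hy.2
    have hDbound : (D.card : ℝ) ≤ (H:ℝ) * (H:ℝ) ^ ε := by
      calc (D.card : ℝ) = ∑ y ∈ Finset.Ioc x (x+H),
            ((D.filter (fun d => ∏ i, d i = y)).card : ℝ) := by
            rw [hfib]; push_cast; rfl
        _ ≤ ∑ _y ∈ Finset.Ioc x (x+H), (H:ℝ) ^ ε := Finset.sum_le_sum hfibbound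
        _ = ((Finset.Ioc x (x+H)).card : ℝ) * (H:ℝ) ^ ε := by
            rw [Finset.sum_const, nsmul_eq_mul]
        _ = (H:ℝ) * (H:ℝ) ^ ε := by
            rw [Nat.card_Ioc, Nat.add_sub_cancel_left x H]
    have hpow : (H:ℝ) * (H:ℝ) ^ ε = (H:ℝ) ^ ((1:ℝ) + ε) := by
      rw [Real.rpow_add (by linarith : (0:ℝ) < (H:ℝ)), Real.rpow_one]
    have hεle : (1:ℝ) + ε ≤ (1:ℝ) + 100 * (k:ℝ) * Real.log k / Real.log (Real.log x) := by
      rw [hε]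
      have hinv : (0:ℝ) ≤ 1/Real.log (Real.log x) := by positivity
      have hkl : (0:ℝ) ≤ (k:ℝ) * Real.log k := by positivity
      have : (50:ℝ) * k * Real.log k / Real.log (Real.log x)
          ≤ 100 * (k:ℝ) * Real.log k / Real.log (Real.log x) := by
        calc (50:ℝ) * k * Real.log k / Real.log (Real.log x)
            = ((50:ℝ) * ((k:ℝ) * Real.log k)) * (1/Real.log (Real.log x)) := by ring
          _ ≤ ((100:ℝ) * ((k:ℝ) * Real.log k)) * (1/Real.log (Real.log x)) := by
              apply mul_le_mul_of_nonneg_right _ hinv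
              linarith [hkl]
          _ = 100 * (k:ℝ) * Real.log k / Real.log (Real.log x) := by ring
      linarith
    have hmono : (H:ℝ) ^ ((1:ℝ) + ε)
        ≤ (H:ℝ) ^ ((1:ℝ) + 100 * (k:ℝ) * Real.log k / Real.log (Real.log x)) :=
      Real.rpow_le_rpow_of_exponent_le hHR1 hεle
    have hfinalpos : (0:ℝ) ≤ (2*(H:ℝ))^k *
        (H:ℝ) ^ ((1:ℝ) + 100 * (k:ℝ) * Real.log k / Real.log (Real.log x)) / x := by
      positivity
    calc (SkCount k x H : ℝ)
        ≤ (D.card : ℝ) * ((2*(H:ℝ))^k / x) := hstep1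
      _ ≤ ((H:ℝ) * (H:ℝ) ^ ε) * ((2*(H:ℝ))^k / x) := by
          apply mul_le_mul_of_nonneg_right hDbound (by positivity)
      _ = (H:ℝ) ^ ((1:ℝ) + ε) * ((2*(H:ℝ))^k / x) := by rw [hpow]
      _ ≤ (H:ℝ) ^ ((1:ℝ) + 100 * (k:ℝ) * Real.log k / Real.log (Real.log x))
            * ((2*(H:ℝ))^k / x) := by
          apply mul_le_mul_of_nonneg_right hmono (by positivity)
      _ = (2*(H:ℝ))^k * (H:ℝ) ^ ((1:ℝ) + 100 * (k:ℝ) * Real.log k / Real.log (Real.log x)) / x := by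
          ring
      _ ≤ 100 * (2*(H:ℝ))^k
            * (H:ℝ) ^ ((1:ℝ) + 100 * (k:ℝ) * Real.log k / Real.log (Real.log x)) / x := by
          have h2 : (100:ℝ) * (2*(H:ℝ))^k
              * (H:ℝ) ^ ((1:ℝ) + 100 * (k:ℝ) * Real.log k / Real.log (Real.log x)) / x
              = 100 * ((2*(H:ℝ))^k
              * (H:ℝ) ^ ((1:ℝ) + 100 * (k:ℝ) * Real.log k / Real.log (Real.log x)) / x) := by
            ring
          rw [h2]
          linarith
end

section
/- For all integers k, y, X, H ≥ 1, the set M_k(X, H; y) := {(x, t₁, t₂, …, t_k) : x, t₁, …, t_k integers, 1 ≤ x ≤ X, 1 ≤ t_i ≤ H for all i, and y | (x+t₁)(x+t₂)⋯(x+t_k)} has size at most H^k · τ_k(y) · (1 + X / rad_k(y)). -/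
open Finset

/-- `τ_k(n)`: the number of `k`-tuples of positive integers with product `n`. -/
noncomputable def tauNat (k n : ℕ) : ℕ :=
  Nat.card {d : Fin k → ℕ // (∀ i, 0 < d i) ∧ ∏ i, d i = n}

/-- `rad_k(n)`: the minimum of `lcm(n₁,…,n_k)` over factorizations `n = n₁⋯n_k`
into positive integers. -/
noncomputable def radk (k n : ℕ) : ℕ :=
  sInf {m : ℕ | ∃ d : Fin k → ℕ, (∀ i, 0 < d i) ∧ ∏ i, d i = n ∧ Finset.univ.lcm d = m}

/-- `M_k(X, H; y)`: the number of tuples `(x, t₁,…,t_k)` with `1 ≤ x ≤ X`,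
`1 ≤ t_i ≤ H` and `y ∣ (x+t₁)⋯(x+t_k)`. -/
noncomputable def MkCount (k X H y : ℕ) : ℕ :=
  Nat.card {t : ℕ × (Fin k → ℕ) //
    t.1 ∈ Finset.Icc 1 X ∧ (∀ i, t.2 i ∈ Finset.Icc 1 H) ∧ y ∣ ∏ i, (t.1 + t.2 i)}

/-- A divisor of a finite product factors as a product of divisors of the factors. -/
lemma exists_factorization {ι : Type*} [DecidableEq ι] (s : Finset ι) (v : ι → ℕ) :
    ∀ y : ℕ, y ∣ ∏ i ∈ s, v i →
      ∃ d : ι → ℕ, (∀ i ∈ s, d i ∣ v i) ∧ ∏ i ∈ s, d i = y := by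
  induction s using Finset.induction with
  | empty =>
    intro y hy
    simp only [Finset.prod_empty, Nat.dvd_one] at hy
    exact ⟨fun _ => 1, by simp, by simp [hy]⟩
  | @insert a s ha ih =>
    intro y hy
    rw [Finset.prod_insert ha] at hy
    obtain ⟨d₁, d₂, h1, h2, heq⟩ := exists_dvd_and_dvd_of_dvd_mul hy
    obtain ⟨f, hf, hfp⟩ := ih d₂ h2
    refine ⟨Function.update f a d₁, ?_, ?_⟩
    · intro i hi
      rcases Finset.mem_insert.mp hi with rfl | hi
      · simpa using h1
      · rw [Function.update_of_ne (ne_of_mem_of_not_mem hi ha)]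
        exact hf i hi
    · have hrest : ∏ x ∈ s, Function.update f a d₁ x = d₂ := by
        rw [← hfp]
        exact Finset.prod_congr rfl fun i hi =>
          Function.update_of_ne (ne_of_mem_of_not_mem hi ha) _ _
      rw [Finset.prod_insert ha, Function.update_self, hrest, heq]

/-- for all integers `k, y, X, H ≥ 1`,
`#M_k(X, H; y) ≤ H^k · τ_k(y) · (1 + X / rad_k(y))`. -/
theorem stmt13 (k y X H : ℕ) (hk : 1 ≤ k) (hy : 1 ≤ y) (hX : 1 ≤ X) (hH : 1 ≤ H) :
    (MkCount k X H y : ℝ) ≤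
      (H : ℝ) ^ k * (tauNat k y : ℝ) * (1 + (X : ℝ) / (radk k y : ℝ)) := by
  classical
  -- The finset of factorizations of y
  set Dfact : Finset (Fin k → ℕ) :=
    (Fintype.piFinset fun _ => Finset.Icc 1 y).filter
      (fun d => (∀ i, 0 < d i) ∧ ∏ i, d i = y) with hDfact
  have hmemD : ∀ d : Fin k → ℕ, ((∀ i, 0 < d i) ∧ ∏ i, d i = y) ↔ d ∈ Dfact := by
    intro d
    rw [hDfact, Finset.mem_filter]
    constructor
    · intro h
      refine ⟨?_, h⟩
      rw [Fintype.mem_piFinset]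
      intro i
      rw [Finset.mem_Icc]
      exact ⟨h.1 i, Nat.le_of_dvd hy (h.2 ▸ Finset.dvd_prod_of_mem d (Finset.mem_univ i))⟩
    · exact fun h => h.2
  -- positivity of products
  have hpos : ∀ d : Fin k → ℕ, ∏ i, d i = y → ∀ i, 0 < d i := by
    intro d hd i
    rcases Nat.eq_zero_or_pos (d i) with h0 | h
    · exfalso
      rw [Finset.prod_eq_zero (Finset.mem_univ i) h0] at hd
      omega
    · exact h
  -- lcm of a factorization divides ... and is positive
  have hlcm : ∀ d ∈ Dfact, 0 < Finset.univ.lcm d ∧ radk k y ≤ Finset.univ.lcm d := by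
    intro d hd
    obtain ⟨hdp, hdprod⟩ := (hmemD d).mpr hd
    have hdy : Finset.univ.lcm d ∣ y :=
      Finset.lcm_dvd (fun i _ => hdprod ▸ Finset.dvd_prod_of_mem d (Finset.mem_univ i))
    have h0 : 0 < Finset.univ.lcm d := by
      rcases Nat.eq_zero_or_pos (Finset.univ.lcm d) with h | h
      · exfalso; rw [h] at hdy; omega
      · exact h
    exact ⟨h0, Nat.sInf_le ⟨d, hdp, hdprod, rfl⟩⟩
  -- tauNat equals card of Dfact
  have htau : tauNat k y = Dfact.card := by
    rw [tauNat]
    have e : {d : Fin k → ℕ // (∀ i, 0 < d i) ∧ ∏ i, d i = y} ≃ {d // d ∈ Dfact} :=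
      Equiv.subtypeEquiv (Equiv.refl _) (by intro d; simpa using hmemD d)
    rw [Nat.card_congr e, Nat.card_eq_fintype_card, Fintype.card_coe]
  -- radk positivity
  have hradpos : 0 < radk k y := by
    have hne : Dfact.Nonempty := by
      obtain ⟨d, hd, hdp⟩ := exists_factorization Finset.univ (fun _ : Fin k => y) y
        (by rw [Finset.prod_const, Finset.card_univ, Fintype.card_fin]
            exact dvd_pow_self y (by omega))
      exact ⟨d, (hmemD d).mp ⟨hpos d hdp, hdp⟩⟩
    obtain ⟨d, hd⟩ := hne
    obtain ⟨hdp, hdprod⟩ := (hmemD d).mpr hd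
    have hmem : Finset.univ.lcm d ∈
        {m : ℕ | ∃ d : Fin k → ℕ, (∀ i, 0 < d i) ∧ ∏ i, d i = y ∧ Finset.univ.lcm d = m} :=
      ⟨d, hdp, hdprod, rfl⟩
    have := Nat.sInf_mem (Set.nonempty_of_mem hmem)
    obtain ⟨d', hd'p, hd'prod, hd'l⟩ := this
    have : d' ∈ Dfact := (hmemD d').mp ⟨hd'p, hd'prod⟩
    rw [radk, ← hd'l]
    exact (hlcm d' this).1
  -- the counting finset for fixed (t, d)
  set A : (Fin k → ℕ) → (Fin k → ℕ) → Finset ℕ := fun t d =>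
    (Finset.Icc 1 X).filter (fun x => ∀ i, d i ∣ x + t i) with hA
  -- key counting bound
  have hcard : ∀ t, ∀ d ∈ Dfact, ((A t d).card : ℝ) ≤ (X : ℝ) / (radk k y : ℝ) + 1 := by
    intro t d hd
    obtain ⟨hL0, hLrad⟩ := hlcm d hd
    set L := Finset.univ.lcm d with hLdef
    have hnat : (A t d).card ≤ X / L + 1 := by
      rcases (A t d).eq_empty_or_nonempty with he | hne
      · simp [he]
      · set x₀ := (A t d).min' hne with hx0
        have hx0mem := (A t d).min'_mem hne
        have key : ∀ x ∈ A t d, L ∣ x - x₀ ∧ x₀ ≤ x := by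
          intro x hx
          have hxle : x₀ ≤ x := Finset.min'_le _ _ hx
          refine ⟨Finset.lcm_dvd fun i _ => ?_, hxle⟩
          have h1 : d i ∣ x + t i := (Finset.mem_filter.mp hx).2 i
          have h2 : d i ∣ x₀ + t i := (Finset.mem_filter.mp hx0mem).2 i
          have := Nat.dvd_sub h1 h2
          rwa [Nat.add_sub_add_right] at this
        have : (A t d).card ≤ (Finset.range (X / L + 1)).card := by
          apply Finset.card_le_card_of_injOn (fun x => (x - x₀) / L)
          · intro x hx
            rw [Finset.mem_coe, Finset.mem_range, Nat.lt_succ_iff]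
            have hxX : x ≤ X := (Finset.mem_Icc.mp (Finset.mem_filter.mp hx).1).2
            exact Nat.div_le_div_right (by omega)
          · intro x hx x' hx' hxx
            have k1 := key x hx
            have k2 := key x' hx'
            have e1 : x = x₀ + L * ((x - x₀) / L) := by
              rw [Nat.mul_div_cancel' k1.1]; omega
            have e2 : x' = x₀ + L * ((x' - x₀) / L) := by
              rw [Nat.mul_div_cancel' k2.1]; omega
            have hxx' : (x - x₀) / L = (x' - x₀) / L := hxx
            rw [e1, e2, hxx']
        simpa using this
    calc ((A t d).card : ℝ) ≤ ((X / L + 1 : ℕ) : ℝ) := by exact_mod_cast hnat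
      _ ≤ (X : ℝ) / (L : ℝ) + 1 := by
          push_cast
          have := Nat.cast_div_le (α := ℝ) (m := X) (n := L)
          linarith
      _ ≤ (X : ℝ) / (radk k y : ℝ) + 1 := by
          have : (X : ℝ) / (L : ℝ) ≤ (X : ℝ) / (radk k y : ℝ) := by
            apply div_le_div_of_nonneg_left (by positivity) (by exact_mod_cast hradpos)
            exact_mod_cast hLrad
          linarith
  -- the big target finset
  set TH : Finset (Fin k → ℕ) := Fintype.piFinset fun _ => Finset.Icc 1 H with hTH
  set T : Finset ((Σ _ : (Fin k → ℕ) × (Fin k → ℕ), ℕ)) :=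
    (TH ×ˢ Dfact).sigma (fun p => A p.1 p.2) with hT
  -- injection from the counted set into T
  have hMle : MkCount k X H y ≤ T.card := by
    rw [MkCount]
    have hmemT : ∀ (s : {t : ℕ × (Fin k → ℕ) //
        t.1 ∈ Finset.Icc 1 X ∧ (∀ i, t.2 i ∈ Finset.Icc 1 H) ∧ y ∣ ∏ i, (t.1 + t.2 i)}),
        (⟨(s.1.2, Classical.choose
            (exists_factorization Finset.univ (fun i => s.1.1 + s.1.2 i) y s.2.2.2)), s.1.1⟩ :
          Σ _ : (Fin k → ℕ) × (Fin k → ℕ), ℕ) ∈ T := by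
      rintro ⟨⟨x, t⟩, hx, ht, hdvd⟩
      simp only
      obtain ⟨hdv, hdprod⟩ := Classical.choose_spec
        (exists_factorization Finset.univ (fun i => x + t i) y hdvd)
      set d := Classical.choose (exists_factorization Finset.univ (fun i => x + t i) y hdvd)
      rw [hT, Finset.mem_sigma]
      constructor
      · rw [Finset.mem_product]
        exact ⟨by rw [hTH, Fintype.mem_piFinset]; exact ht,
          (hmemD d).mp ⟨hpos d hdprod, hdprod⟩⟩
      · rw [hA]
        exact Finset.mem_filter.mpr ⟨hx, fun i => hdv i (Finset.mem_univ i)⟩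
    have : Nat.card {t : ℕ × (Fin k → ℕ) //
        t.1 ∈ Finset.Icc 1 X ∧ (∀ i, t.2 i ∈ Finset.Icc 1 H) ∧ y ∣ ∏ i, (t.1 + t.2 i)} ≤
        Nat.card {p // p ∈ T} := by
      apply Nat.card_le_card_of_injective (fun s => (⟨_, hmemT s⟩ : {p // p ∈ T}))
      intro s s' hss
      have h1 := congrArg (fun p => p.1.1.1) hss
      have h2 := congrArg (fun p => p.1.2) hss
      simp only at h1 h2
      exact Subtype.ext (Prod.ext h2 h1)
    rwa [Nat.card_eq_fintype_card (α := {p // p ∈ T}), Fintype.card_coe] at this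
  -- compute the bound
  have hTcard : (T.card : ℝ) ≤ ((H : ℝ) ^ k * (Dfact.card : ℝ)) * ((X : ℝ) / (radk k y) + 1) := by
    rw [hT, Finset.card_sigma]
    push_cast
    calc (∑ p ∈ TH ×ˢ Dfact, ((A p.1 p.2).card : ℝ))
        ≤ ∑ _p ∈ TH ×ˢ Dfact, ((X : ℝ) / (radk k y) + 1) := by
          apply Finset.sum_le_sum
          intro p hp
          exact hcard p.1 p.2 (Finset.mem_product.mp hp).2
      _ = ((TH ×ˢ Dfact).card : ℝ) * ((X : ℝ) / (radk k y) + 1) := by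
          rw [Finset.sum_const, nsmul_eq_mul]
      _ = ((H : ℝ) ^ k * (Dfact.card : ℝ)) * ((X : ℝ) / (radk k y) + 1) := by
          rw [Finset.card_product]
          have : TH.card = H ^ k := by
            rw [hTH, Fintype.card_piFinset]
            simp [Nat.card_Icc]
          rw [this]; push_cast; ring
  calc (MkCount k X H y : ℝ) ≤ (T.card : ℝ) := by exact_mod_cast hMle
    _ ≤ ((H : ℝ) ^ k * (Dfact.card : ℝ)) * ((X : ℝ) / (radk k y) + 1) := hTcard
    _ = (H : ℝ) ^ k * (tauNat k y : ℝ) * (1 + (X : ℝ) / (radk k y : ℝ)) := by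
        rw [htau]; ring
end
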